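/- arXiv:1007.3211 — 3 statements merged into one kernel-verified Lean document; each statement's English description precedes it below -/
import Mathlib

section
/- Let H be a complex Hilbert space and let P : H →L[ℂ] H be an orthogonal projection (a self-adjoint idempotent bounded operator). If A and B are bounded operators on H with A and B positive, 1 − A and 1 − B positive (i.e., A and B are effects), and P = (1/2) • (A + B), then A = P and B = P. (Hence projections are extreme points of the set of effects, which yields that projection valued measures are pure, i.e., extremal, POVMs.) -/
open ContinuousLinearMap RCLike
local notation "⟪" x ", " y "⟫_ℂ" => @inner ℂ _ _ x y

/-- A positive operator with vanishing quadratic form at `x` kills `x`. -/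
lemma aux_pos_inner_zero {H : Type*} [NormedAddCommGroup H] [InnerProductSpace ℂ H]
    [CompleteSpace H] {T : H →L[ℂ] H} (hT : T.IsPositive) {x : H}
    (hx : re (⟪T x, x⟫_ℂ) = 0) : T x = 0 := by
  set a : ℝ := ‖T x‖ ^ 2 with ha
  set c : ℝ := re (⟪T (T x), T x⟫_ℂ) with hc
  have hc0 : 0 ≤ c := hT.re_inner_nonneg_left (T x)
  set t : ℝ := -a / (c + 1) with ht
  have key : 0 ≤ re (⟪T (x + (t : ℂ) • T x), x + (t : ℂ) • T x⟫_ℂ) :=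
    hT.re_inner_nonneg_left _
  have hsymm := isSelfAdjoint_iff_isSymmetric.mp hT.isSelfAdjoint
  have hsym : ⟪T (T x), x⟫_ℂ = ⟪T x, T x⟫_ℂ := hsymm (T x) x
  have h3 : re (⟪T x, T x⟫_ℂ) = a := by
    rw [ha, ← inner_self_eq_norm_sq (𝕜 := ℂ) (T x)]
  have him : Complex.im (⟪T x, T x⟫_ℂ) = 0 := inner_self_im (𝕜 := ℂ) (T x)
  have expand : re (⟪T (x + (t : ℂ) • T x), x + (t : ℂ) • T x⟫_ℂ)
      = 2 * t * a + t ^ 2 * c := by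
    have h1 : T (x + (t : ℂ) • T x) = T x + (t : ℂ) • T (T x) := by
      rw [map_add, map_smul]
    rw [h1]
    simp only [inner_add_left, inner_add_right, inner_smul_left, inner_smul_right, hsym,
      map_add, Complex.conj_ofReal]
    simp only [RCLike.re_to_complex] at *
    simp [Complex.add_re, Complex.mul_re, Complex.ofReal_re, Complex.ofReal_im, hx, h3, him, hc]
    rw [← Complex.ofReal_pow, Complex.ofReal_re, ← ha]
    ring
  rw [expand] at key
  have hae : a = 0 := by
    by_contra h
    have ha0 : 0 < a := lt_of_le_of_ne (by positivity) (Ne.symm h)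
    have hcpos : 0 < c + 1 := by linarith
    have heq : 2 * t * a + t ^ 2 * c
        = (a ^ 2 / (c + 1) ^ 2) * (c - 2 * (c + 1)) := by
      rw [ht]; field_simp; ring
    rw [heq] at key
    nlinarith [mul_pos (div_pos (by positivity : (0:ℝ) < a ^ 2)
      (by positivity : (0:ℝ) < (c+1)^2)) (by linarith : (0:ℝ) < (c + 2))]
  have : ‖T x‖ = 0 := by nlinarith [norm_nonneg (T x)]
  simpa using this

/-- An orthogonal projection (self-adjoint idempotent bounded operator) on a complex Hilbert
space is an extreme point of the set of effects: if `P = (1/2) • (A + B)` for effects `A`, `B`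
(positive operators with `1 - A`, `1 - B` positive), then `A = P` and `B = P`. -/
theorem projection_extreme_in_effects
    {H : Type*} [NormedAddCommGroup H] [InnerProductSpace ℂ H] [CompleteSpace H]
    (P A B : H →L[ℂ] H)
    (hPsa : IsSelfAdjoint P) (hPidem : IsIdempotentElem P)
    (hA : A.IsPositive) (hA' : ((1 : H →L[ℂ] H) - A).IsPositive)
    (hB : B.IsPositive) (hB' : ((1 : H →L[ℂ] H) - B).IsPositive)
    (hP : P = (1 / 2 : ℂ) • (A + B)) :
    A = P ∧ B = P := by
  have hsum : ∀ x : H, A x + B x = (2 : ℂ) • P x := by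
    intro x
    have h1 : P x = (1 / 2 : ℂ) • (A x + B x) := by rw [hP]; simp
    rw [h1, smul_smul]; norm_num
  -- On the kernel of P, A and B vanish
  have hker : ∀ x : H, P x = 0 → A x = 0 ∧ B x = 0 := by
    intro x hx
    have h0 : A x + B x = 0 := by rw [hsum x, hx, smul_zero]
    have h1 : re (⟪A x, x⟫_ℂ) + re (⟪B x, x⟫_ℂ) = 0 := by
      have := congrArg (fun z : H => re (⟪z, x⟫_ℂ)) h0
      simpa [inner_add_left] using this
    have hAx : re (⟪A x, x⟫_ℂ) = 0 :=
      le_antisymm (by linarith [hB.re_inner_nonneg_left x]) (hA.re_inner_nonneg_left x)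
    have hBx : re (⟪B x, x⟫_ℂ) = 0 := by linarith
    exact ⟨aux_pos_inner_zero hA hAx, aux_pos_inner_zero hB hBx⟩
  -- On the fixed points of P, A and B act as the identity
  have hran : ∀ x : H, P x = x → A x = x ∧ B x = x := by
    intro x hx
    have h0 : ((1 : H →L[ℂ] H) - A) x + ((1 : H →L[ℂ] H) - B) x = 0 := by
      simp only [sub_apply, one_apply_eq_self]
      have h2 := hsum x
      rw [hx, two_smul] at h2
      have : (x - A x) + (x - B x) = (x + x) - (A x + B x) := by abel
      rw [this, ← h2, sub_self]
    have h1 : re (⟪((1 : H →L[ℂ] H) - A) x, x⟫_ℂ)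
        + re (⟪((1 : H →L[ℂ] H) - B) x, x⟫_ℂ) = 0 := by
      have := congrArg (fun z : H => re (⟪z, x⟫_ℂ)) h0
      simpa [inner_add_left] using this
    have hAx : re (⟪((1 : H →L[ℂ] H) - A) x, x⟫_ℂ) = 0 :=
      le_antisymm (by linarith [hB'.re_inner_nonneg_left x]) (hA'.re_inner_nonneg_left x)
    have hBx : re (⟪((1 : H →L[ℂ] H) - B) x, x⟫_ℂ) = 0 := by linarith
    have hA1 := aux_pos_inner_zero hA' hAx
    have hB1 := aux_pos_inner_zero hB' hBx
    simp only [sub_apply, one_apply_eq_self, sub_eq_zero] at hA1 hB1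
    exact ⟨hA1.symm, hB1.symm⟩
  have hfix : ∀ x : H, P (P x) = P x := by
    intro x
    have h := hPidem
    rw [IsIdempotentElem] at h
    calc P (P x) = (P * P) x := rfl
      _ = P x := by rw [h]
  have hcompl : ∀ x : H, P (x - P x) = 0 := by
    intro x; rw [map_sub, hfix, sub_self]
  constructor
  · ext x
    have h1 := (hran (P x) (hfix x)).1
    have h2 := (hker (x - P x) (hcompl x)).1
    have h3 : A x = A (P x) + A (x - P x) := by
      rw [← map_add]; congr 1; abel
    rw [h3, h1, h2, add_zero]
  · ext x
    have h1 := (hran (P x) (hfix x)).2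
    have h2 := (hker (x - P x) (hcompl x)).2
    have h3 : B x = B (P x) + B (x - P x) := by
      rw [← map_add]; congr 1; abel
    rw [h3, h1, h2, add_zero]
end

section
/- Let H and H' be separable complex Hilbert spaces with Hilbert bases (e_s)_{s∈ℕ} of H and (e'_n)_{n∈ℕ} of H', and let (A_k)_{k∈ℕ} be a family of bounded linear operators A_k : H' →L[ℂ] H such that Σ_k ‖A_k x‖² = ‖x‖² for every x ∈ H' (a Kraus family summing to the identity). For n, s ∈ ℕ define the sequence v_n^s := (k ↦ ⟨e_s, A_k e'_n⟩). Then: (i) each v_n^s lies in ℓ²(ℕ, ℂ); (ii) for all n, m the family ((s,k) ↦ conj(⟨e_s, A_k e'_n⟩) · ⟨e_s, A_k e'_m⟩) indexed by ℕ × ℕ is summable; and (iii) Σ_s ⟨v_n^s, v_m^s⟩_{ℓ²} = δ_{nm} (equal to 1 if n = m and 0 otherwise). -/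
open scoped ComplexConjugate ENNReal

/-- Polarization identity over `ℂ`, spelled with `Complex.I`. -/
lemma polar_aux {E : Type*} [NormedAddCommGroup E] [InnerProductSpace ℂ E] (u v : E) :
    (inner ℂ u v : ℂ) = ((‖u + v‖ : ℂ) ^ 2 - (‖u - v‖ : ℂ) ^ 2 +
      ((‖u - Complex.I • v‖ : ℂ) ^ 2 - (‖u + Complex.I • v‖ : ℂ) ^ 2) * Complex.I) / 4 := by
  simpa using inner_eq_sum_norm_sq_div_four (𝕜 := ℂ) u v

/-- Kraus sums of inner products: `Σ_k ⟪A k x, A k y⟫ = ⟪x, y⟫` via polarization. -/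
lemma kraus_hasSum_inner
    {H H' : Type*}
    [NormedAddCommGroup H] [InnerProductSpace ℂ H]
    [NormedAddCommGroup H'] [InnerProductSpace ℂ H']
    (A : ℕ → H' →L[ℂ] H)
    (hKraus : ∀ x : H', HasSum (fun k : ℕ => ‖A k x‖ ^ 2) (‖x‖ ^ 2))
    (x y : H') :
    HasSum (fun k : ℕ => (inner ℂ (A k x) (A k y) : ℂ)) (inner ℂ x y : ℂ) := by
  have hC : ∀ z : H', HasSum (fun k : ℕ => ((‖A k z‖ : ℂ) ^ 2)) ((‖z‖ : ℂ) ^ 2) := by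
    intro z
    have := (Complex.ofRealCLM : ℝ →L[ℝ] ℂ).hasSum (hKraus z)
    simpa using this
  have h1 := hC (x + y)
  have h2 := hC (x - y)
  have h3 := hC (x - Complex.I • y)
  have h4 := hC (x + Complex.I • y)
  have hTot := (((h1.sub h2).add ((h3.sub h4).mul_right Complex.I)).div_const 4)
  have := hTot
  rw [show ((‖x + y‖:ℂ)^2 - (‖x - y‖:ℂ)^2 + ((‖x - Complex.I • y‖:ℂ)^2
      - (‖x + Complex.I • y‖:ℂ)^2) * Complex.I) / 4 = (inner ℂ x y : ℂ) from (polar_aux x y).symm] at this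
  refine this.congr_fun fun k => ?_
  rw [polar_aux (A k x) (A k y)]
  simp [map_add, map_sub, map_smul]

/-- Parseval for norms squared with a Hilbert basis. -/
lemma hilbertBasis_hasSum_norm_sq
    {H : Type*} [NormedAddCommGroup H] [InnerProductSpace ℂ H] [CompleteSpace H]
    (e : HilbertBasis ℕ ℂ H) (u : H) :
    HasSum (fun s : ℕ => ‖(inner ℂ (e s) u : ℂ)‖ ^ 2) (‖u‖ ^ 2) := by
  have h := e.hasSum_inner_mul_inner u u
  have hterm : ∀ s : ℕ, (inner ℂ u (e s) : ℂ) * (inner ℂ (e s) u : ℂ)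
      = (((‖(inner ℂ (e s) u : ℂ)‖ ^ 2 : ℝ)) : ℂ) := by
    intro s
    rw [← inner_conj_symm u (e s), RCLike.conj_mul]
    norm_cast
  have hval : (inner ℂ u u : ℂ) = (((‖u‖ ^ 2 : ℝ)) : ℂ) := by
    rw [inner_self_eq_norm_sq_to_K]
    norm_cast
  rw [funext hterm, hval] at h
  exact Complex.hasSum_ofReal.mp h

/-- For a Kraus family `(A_k)` with `Σ_k ‖A_k x‖² = ‖x‖²` and Hilbert bases `(e_s)`, `(e'_n)`,
the columns `v_n^s = (k ↦ ⟨e_s, A_k e'_n⟩)` are in `ℓ²`, the doubly-indexed families of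
products are summable, and `Σ_s ⟨v_n^s, v_m^s⟩ = δ_{nm}`. -/
theorem kraus_columns_orthonormal
    {H H' : Type*}
    [NormedAddCommGroup H] [InnerProductSpace ℂ H] [CompleteSpace H]
    [NormedAddCommGroup H'] [InnerProductSpace ℂ H'] [CompleteSpace H']
    (e : HilbertBasis ℕ ℂ H) (e' : HilbertBasis ℕ ℂ H')
    (A : ℕ → H' →L[ℂ] H)
    (hKraus : ∀ x : H', HasSum (fun k : ℕ => ‖A k x‖ ^ 2) (‖x‖ ^ 2)) :
    (∀ n s : ℕ, Memℓp (fun k : ℕ => (inner ℂ (e s) (A k (e' n)) : ℂ)) 2) ∧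
    (∀ n m : ℕ, Summable (fun p : ℕ × ℕ =>
      (starRingEnd ℂ) (inner ℂ (e p.1) (A p.2 (e' n)) : ℂ) * (inner ℂ (e p.1) (A p.2 (e' m)) : ℂ))) ∧
    (∀ n m : ℕ, (∑' s : ℕ, ∑' k : ℕ,
        (starRingEnd ℂ) (inner ℂ (e s) (A k (e' n)) : ℂ) * (inner ℂ (e s) (A k (e' m)) : ℂ))
      = if n = m then 1 else 0) := by
  -- summability of the doubly indexed squared norms
  have hS1 : ∀ n : ℕ, Summable (fun p : ℕ × ℕ => ‖(inner ℂ (e p.1) (A p.2 (e' n)) : ℂ)‖ ^ 2) := by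
    intro n
    rw [← (Equiv.prodComm ℕ ℕ).summable_iff]
    have : ∀ k : ℕ, HasSum (fun s : ℕ => ‖(inner ℂ (e s) (A k (e' n)) : ℂ)‖ ^ 2)
        (‖A k (e' n)‖ ^ 2) := fun k => hilbertBasis_hasSum_norm_sq e (A k (e' n))
    apply (summable_prod_of_nonneg (f := fun q : ℕ × ℕ =>
      ‖(inner ℂ (e q.2) (A q.1 (e' n)) : ℂ)‖ ^ 2) (fun q => by positivity)).mpr
    constructor
    · exact fun k => (this k).summable
    · refine ((hKraus (e' n)).summable).congr fun k => ?_
      exact ((this k).tsum_eq).symm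
  -- summability of the product family
  have hS2 : ∀ n m : ℕ, Summable (fun p : ℕ × ℕ =>
      (starRingEnd ℂ) (inner ℂ (e p.1) (A p.2 (e' n)) : ℂ) * (inner ℂ (e p.1) (A p.2 (e' m)) : ℂ)) := by
    intro n m
    apply Summable.of_norm
    have hb := (((hS1 n).add (hS1 m)).div_const 2)
    refine hb.of_nonneg_of_le (fun p => norm_nonneg _) fun p => ?_
    rw [norm_mul, RCLike.norm_conj]
    set a := ‖(inner ℂ (e p.1) (A p.2 (e' n)) : ℂ)‖
    set b := ‖(inner ℂ (e p.1) (A p.2 (e' m)) : ℂ)‖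
    nlinarith [sq_nonneg (a - b), norm_nonneg ((inner ℂ (e p.1) (A p.2 (e' n)) : ℂ))]
  refine ⟨?_, hS2, ?_⟩
  · -- Memℓp
    intro n s
    apply memℓp_gen
    have h2 : (2 : ℝ≥0∞).toReal = 2 := by norm_num
    rw [h2]
    have hsum : Summable (fun k : ℕ => ‖A k (e' n)‖ ^ 2) := (hKraus (e' n)).summable
    refine hsum.of_nonneg_of_le (fun k => by positivity) fun k => ?_
    rw [show ‖(fun k : ℕ => (inner ℂ (e s) (A k (e' n)) : ℂ)) k‖ ^ (2:ℝ)
        = ‖(inner ℂ (e s) (A k (e' n)) : ℂ)‖ ^ (2:ℕ) by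
      rw [← Real.rpow_natCast]; norm_num]
    have hle : ‖(inner ℂ (e s) (A k (e' n)) : ℂ)‖ ≤ ‖A k (e' n)‖ := by
      have := norm_inner_le_norm (𝕜 := ℂ) (e s) (A k (e' n))
      simpa [e.orthonormal.1 s] using this
    exact pow_le_pow_left₀ (norm_nonneg _) hle 2
  · -- the orthonormality relation
    intro n m
    set f : ℕ → ℕ → ℂ := fun s k =>
      (starRingEnd ℂ) (inner ℂ (e s) (A k (e' n)) : ℂ) * (inner ℂ (e s) (A k (e' m)) : ℂ) with hf
    have huncurry : Summable (Function.uncurry f) := hS2 n m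
    have hswap : (∑' s : ℕ, ∑' k : ℕ, f s k) = ∑' k : ℕ, ∑' s : ℕ, f s k :=
      Summable.tsum_comm huncurry.prod_symm
    have hinner : ∀ k : ℕ, (∑' s : ℕ, f s k) = (inner ℂ (A k (e' n)) (A k (e' m)) : ℂ) := by
      intro k
      have h := e.hasSum_inner_mul_inner (A k (e' n)) (A k (e' m))
      rw [← h.tsum_eq]
      refine tsum_congr fun s => ?_
      rw [hf]
      simp only [← inner_conj_symm (A k (e' n)) (e s)]
    calc (∑' s : ℕ, ∑' k : ℕ, f s k) = ∑' k : ℕ, ∑' s : ℕ, f s k := hswap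
      _ = ∑' k : ℕ, (inner ℂ (A k (e' n)) (A k (e' m)) : ℂ) := tsum_congr hinner
      _ = (inner ℂ (e' n) (e' m) : ℂ) := (kraus_hasSum_inner A hKraus (e' n) (e' m)).tsum_eq
      _ = if n = m then 1 else 0 := orthonormal_iff_ite.mp e'.orthonormal n m
end

section
/- Let H and H' be separable complex Hilbert spaces with Hilbert bases (e_s)_{s∈ℕ} of H and (e'_n)_{n∈ℕ} of H'. Let v : ℕ → ℕ → ℓ²(ℕ, ℂ) (written (n,s) ↦ v_n^s) be such that for all n, m ∈ ℕ the family ((s,k) ↦ conj(v_n^s k) · (v_m^s k)) indexed by ℕ × ℕ is summable with sum δ_{nm}. Then there exists a family of bounded linear operators A_k : H' →L[ℂ] H, k ∈ ℕ, such that ⟨e_s, A_k e'_n⟩ = v_n^s k for all s, n, k, and Σ_k ‖A_k x‖² = ‖x‖² for every x ∈ H'. -/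
open scoped ENNReal ComplexConjugate

noncomputable section

namespace KrausAux

/-- pointwise squares of an `ℓ²` element sum to the squared norm. -/
lemma hasSum_sq {ι : Type*} (f : lp (fun _ : ι => ℂ) 2) :
    HasSum (fun i => ‖f i‖ ^ 2) (‖f‖ ^ 2) := by
  have h := lp.hasSum_norm (E := fun _ : ι => ℂ) (p := 2) (by norm_num) f
  simp only [show ((2:ℝ≥0∞).toReal) = ((2:ℕ):ℝ) by norm_num, Real.rpow_natCast] at h
  exact h

lemma memℓp_of_sq {ι : Type*} {g : ι → ℂ} (hg : Summable fun i => ‖g i‖ ^ 2) :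
    Memℓp g 2 := by
  apply memℓp_gen
  simp only [show ((2:ℝ≥0∞).toReal) = ((2:ℕ):ℝ) by norm_num, Real.rpow_natCast]
  exact hg

/-- restriction to a fiber, as a linear map -/
def rest (k : ℕ) : lp (fun _ : ℕ × ℕ => ℂ) 2 →ₗ[ℂ] lp (fun _ : ℕ => ℂ) 2 where
  toFun f := ⟨fun s => f (s, k),
    memℓp_of_sq ((hasSum_sq f).summable.comp_injective
      (fun s t h => by simpa using congrArg Prod.fst h))⟩
  map_add' f g := by
    apply Subtype.ext
    funext s
    simp only [lp.coeFn_add, Pi.add_apply]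
  map_smul' c f := by
    apply Subtype.ext
    funext s
    simp only [lp.coeFn_smul, Pi.smul_apply]
    rfl

set_option maxHeartbeats 1000000 in
@[simp] lemma rest_apply (k : ℕ) (f : lp (fun _ : ℕ × ℕ => ℂ) 2) (s : ℕ) :
    (rest k f : ℕ → ℂ) s = f (s, k) := rfl

set_option maxHeartbeats 1000000 in
lemma rest_norm_le (k : ℕ) (f : lp (fun _ : ℕ × ℕ => ℂ) 2) : ‖rest k f‖ ≤ ‖f‖ := by
  have h1 := hasSum_sq (rest k f)
  have h2 := hasSum_sq f
  have hsq : ‖rest k f‖ ^ 2 ≤ ‖f‖ ^ 2 := by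
    refine hasSum_le_inj (fun s => (s, k)) (fun s t h => by simpa using congrArg Prod.fst h)
      (fun c _ => by positivity) (fun s => ?_) h1 h2
    simp
  calc ‖rest k f‖ = Real.sqrt (‖rest k f‖ ^ 2) := (Real.sqrt_sq (norm_nonneg _)).symm
    _ ≤ Real.sqrt (‖f‖ ^ 2) := Real.sqrt_le_sqrt hsq
    _ = ‖f‖ := Real.sqrt_sq (norm_nonneg _)

def restL (k : ℕ) : lp (fun _ : ℕ × ℕ => ℂ) 2 →L[ℂ] lp (fun _ : ℕ => ℂ) 2 :=
  LinearMap.mkContinuous (rest k) 1 (fun f => by simpa using rest_norm_le k f)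

@[simp] lemma restL_apply (k : ℕ) (f : lp (fun _ : ℕ × ℕ => ℂ) 2) (s : ℕ) :
    (restL k f : ℕ → ℂ) s = f (s, k) := rfl

end KrausAux

open KrausAux in
set_option maxHeartbeats 2000000 in
/-- Converse Kraus construction: from vectors `v_n^s ∈ ℓ²(ℕ, ℂ)` satisfying the orthonormality
relation `Σ_{s,k} conj(v_n^s k) (v_m^s k) = δ_{nm}`, one builds bounded operators
`A_k : H' →L[ℂ] H` with matrix elements `⟨e_s, A_k e'_n⟩ = v_n^s k` and
`Σ_k ‖A_k x‖² = ‖x‖²` for all `x`. -/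
theorem exists_kraus_family_of_columns
    {H H' : Type*}
    [NormedAddCommGroup H] [InnerProductSpace ℂ H] [CompleteSpace H]
    [NormedAddCommGroup H'] [InnerProductSpace ℂ H'] [CompleteSpace H']
    (e : HilbertBasis ℕ ℂ H) (e' : HilbertBasis ℕ ℂ H')
    (v : ℕ → ℕ → lp (fun _ : ℕ => ℂ) 2)
    (hv : ∀ n m : ℕ, HasSum
      (fun p : ℕ × ℕ => (starRingEnd ℂ) (v n p.1 p.2) * v m p.1 p.2)
      (if n = m then 1 else 0)) :
    ∃ A : ℕ → H' →L[ℂ] H,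
      (∀ s n k : ℕ, (inner ℂ (e s) (A k (e' n)) : ℂ) = v n s k) ∧
      (∀ x : H', HasSum (fun k : ℕ => ‖A k x‖ ^ 2) (‖x‖ ^ 2)) := by
  classical
  have key : ∀ z : ℂ, (starRingEnd ℂ) z * z = ((‖z‖ ^ 2 : ℝ) : ℂ) := fun z => by
    rw [mul_comm, Complex.mul_conj]
    norm_cast
    simp [Complex.normSq_eq_norm_sq]
  have hsum : ∀ n, HasSum (fun p : ℕ × ℕ => ‖v n p.1 p.2‖ ^ 2) 1 := by
    intro n
    have h := hv n n
    rw [if_pos rfl] at h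
    simp only [key] at h
    rwa [show (1 : ℂ) = ((1 : ℝ) : ℂ) by norm_num, Complex.hasSum_ofReal] at h
  set w : ℕ → lp (fun _ : ℕ × ℕ => ℂ) 2 :=
    fun n => ⟨fun p => v n p.1 p.2, memℓp_of_sq (hsum n).summable⟩ with hw_def
  have hw : Orthonormal ℂ w := by
    rw [orthonormal_iff_ite]
    intro n m
    refine (lp.hasSum_inner (𝕜 := ℂ) (w n) (w m)).unique ?_
    simp only [RCLike.inner_apply]
    have hvnm := hv n m
    simp only [mul_comm ((starRingEnd ℂ) _)] at hvnm
    exact hvnm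
  let WLI := hw.orthogonalFamily.linearIsometry
  let A : ℕ → H' →L[ℂ] H := fun k =>
    ((e.repr.symm.toContinuousLinearEquiv : lp (fun _ : ℕ => ℂ) 2 →L[ℂ] H)).comp
      ((restL k).comp (WLI.toContinuousLinearMap.comp
        ((e'.repr.toContinuousLinearEquiv : H' →L[ℂ] lp (fun _ : ℕ => ℂ) 2))))
  have hAk : ∀ (k : ℕ) (y : H'), A k y = e.repr.symm (restL k (WLI (e'.repr y))) :=
    fun k y => rfl
  refine ⟨A, ?_, ?_⟩
  · intro s n k
    have h2 : WLI (lp.single 2 n 1) = w n := by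
      rw [show WLI = hw.orthogonalFamily.linearIsometry from rfl,
        hw.orthogonalFamily.linearIsometry_apply_single]
      simp [LinearIsometry.toSpanSingleton_apply]
    rw [← e.repr_apply_apply, hAk, e'.repr_self, h2,
      LinearIsometryEquiv.apply_symm_apply]
    rfl
  · intro x
    set f := WLI (e'.repr x) with hf
    have hnf : ‖f‖ = ‖x‖ := by
      rw [hf, WLI.norm_map, e'.repr.norm_map]
    have hAx : ∀ k, ‖A k x‖ = ‖restL k f‖ := fun k => by
      rw [hAk]; exact e.repr.symm.norm_map _
    have hbig : HasSum (fun q : ℕ × ℕ => ‖f (q.2, q.1)‖ ^ 2) (‖f‖ ^ 2) :=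
      ((Equiv.prodComm ℕ ℕ).hasSum_iff).2 (hasSum_sq f)
    have hfib : ∀ k, HasSum (fun s => ‖f (s, k)‖ ^ 2) (‖restL k f‖ ^ 2) := fun k =>
      hasSum_sq (restL k f)
    have h := hbig.prod_fiberwise hfib
    simp only [hAx, ← hnf]
    exact h

end
end
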